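/- If a fair coin is tossed repeatedly until the total number of heads so far is odd and the total number of tails so far is even, then the expected number of tosses is 3. -/

import Mathlib

def tc {t : ℕ} (v : Fin t → Bool) (s : ℕ) : ℕ :=
  (Finset.univ.filter fun i : Fin t => (i : ℕ) < s ∧ v i = false).card

def hc {t : ℕ} (v : Fin t → Bool) (s : ℕ) : ℕ :=
  (Finset.univ.filter fun i : Fin t => (i : ℕ) < s ∧ v i = true).card

lemma tc_as_sum {t : ℕ} (v : Fin t → Bool) (s : ℕ) :
    tc v s = ∑ i : Fin t, if (i : ℕ) < s ∧ v i = false then 1 else 0 := by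
  rw [tc, Finset.card_filter]

lemma hc_as_sum {t : ℕ} (v : Fin t → Bool) (s : ℕ) :
    hc v s = ∑ i : Fin t, if (i : ℕ) < s ∧ v i = true then 1 else 0 := by
  rw [hc, Finset.card_filter]

lemma hc_add_tc {t : ℕ} (v : Fin t → Bool) (s : ℕ) (hs : s ≤ t) :
    hc v s + tc v s = s := by
  classical
  rw [hc_as_sum, tc_as_sum, ← Finset.sum_add_distrib]
  have h2 : ∀ i : Fin t, ((if (i : ℕ) < s ∧ v i = true then 1 else 0)
        + (if (i : ℕ) < s ∧ v i = false then 1 else 0)) = if (i : ℕ) < s then 1 else 0 := by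
    intro i
    cases h : v i <;> by_cases hlt : (i : ℕ) < s <;> simp [h, hlt]
  rw [Finset.sum_congr rfl fun i _ => h2 i]
  rw [← Finset.card_filter]
  rw [show (Finset.univ.filter fun i : Fin t => (i:ℕ) < s) = Finset.map (Fin.castLEEmb hs) Finset.univ from ?_]
  · simp
  · ext i
    simp only [Finset.mem_filter, Finset.mem_univ, true_and, Finset.mem_map]
    constructor
    · intro hi
      refine ⟨⟨i, hi⟩, ?_⟩
      simp [Fin.castLEEmb, Fin.ext_iff]
    · rintro ⟨j, rfl⟩
      simpa using j.isLt

/-- Among the first `s` tosses of the length-`t` toss sequence `v` (`true` = heads,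
`false` = tails), the number of heads is odd and the number of tails is even. -/
def stopsAt {t : ℕ} (v : Fin t → Bool) (s : ℕ) : Prop :=
  Odd (Finset.univ.filter fun i : Fin t => (i : ℕ) < s ∧ v i = true).card ∧
  Even (Finset.univ.filter fun i : Fin t => (i : ℕ) < s ∧ v i = false).card

lemma stopsAt_iff {t : ℕ} (v : Fin t → Bool) (s : ℕ) (hs : s ≤ t) :
    stopsAt v s ↔ Odd s ∧ Even (tc v s) := by
  have hsum := hc_add_tc v s hs
  show Odd (hc v s) ∧ Even (tc v s) ↔ _
  rw [Nat.odd_iff, Nat.even_iff, Nat.odd_iff]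
  omega

lemma tc_snoc {n : ℕ} (w : Fin n → Bool) (b : Bool) (s : ℕ) :
    tc (Fin.snoc w b) s = tc w s + (if n < s ∧ b = false then 1 else 0) := by
  rw [tc_as_sum, tc_as_sum, Fin.sum_univ_castSucc]
  simp [Fin.snoc_castSucc, Fin.snoc_last]

lemma tc_of_ge {n : ℕ} (w : Fin n → Bool) {s : ℕ} (hs : n ≤ s) : tc w s = tc w n := by
  rw [tc_as_sum, tc_as_sum]
  refine Finset.sum_congr rfl fun i _ => ?_
  have h1 : (i : ℕ) < n := i.isLt
  have h2 : (i : ℕ) < s := lt_of_lt_of_le h1 hs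
  simp [h1, h2]

lemma tc_snoc2 {n : ℕ} (w : Fin n → Bool) (b c : Bool) {s : ℕ} (hs : s ≤ n) :
    tc (Fin.snoc (Fin.snoc w b) c : Fin (n + 2) → Bool) s = tc w s := by
  rw [tc_snoc, tc_snoc]
  have h1 : ¬ (n < s) := by omega
  have h2 : ¬ (n + 1 < s) := by omega
  simp [h1, h2]

lemma tc_snoc2_last {n : ℕ} (w : Fin n → Bool) (b c : Bool) :
    tc (Fin.snoc (Fin.snoc w b) c : Fin (n + 2) → Bool) (n + 2)
      = tc w n + (if b = false then 1 else 0) + (if c = false then 1 else 0) := by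
  rw [tc_snoc, tc_of_ge (Fin.snoc w b) (by omega : n + 1 ≤ n + 2), tc_snoc,
    tc_of_ge w (by omega : n ≤ n + 1)]
  simp

def allOdd (k : ℕ) (v : Fin (2 * k + 1) → Bool) : Prop :=
  ∀ j ≤ k, Odd (tc v (2 * j + 1))

lemma snoc2_eval_last {n : ℕ} (w : Fin n → Bool) (b c : Bool) :
    (Fin.snoc (Fin.snoc w b) c : Fin (n + 2) → Bool) ((Fin.last n).castSucc) = b := by
  rw [Fin.snoc_castSucc, Fin.snoc_last]

lemma snoc2_eval {n : ℕ} (w : Fin n → Bool) (b c : Bool) (i : Fin n) :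
    (Fin.snoc (Fin.snoc w b) c : Fin (n + 2) → Bool) (i.castSucc.castSucc) = w i := by
  rw [Fin.snoc_castSucc, Fin.snoc_castSucc]

lemma eq_snoc2 {n : ℕ} (v : Fin (n + 2) → Bool) :
    v = Fin.snoc (Fin.snoc (fun i : Fin n => v (i.castSucc.castSucc))
        (v ((Fin.last n).castSucc))) (v (Fin.last (n + 1))) := by
  funext i
  refine Fin.lastCases ?_ (fun j => ?_) i
  · rw [Fin.snoc_last]
  · rw [Fin.snoc_castSucc]
    refine Fin.lastCases ?_ (fun j' => ?_) j
    · rw [Fin.snoc_last]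
    · rw [Fin.snoc_castSucc]

lemma card_step (k : ℕ) (fp : Bool) :
    Nat.card {v : Fin ((2 * k + 1) + 2) → Bool //
        (∀ j ≤ k, Odd (tc v (2 * j + 1))) ∧ (Odd (tc v ((2 * k + 1) + 2)) ↔ fp = true)}
      = 2 * Nat.card {w : Fin (2 * k + 1) → Bool // ∀ j ≤ k, Odd (tc w (2 * j + 1))} := by
  have hf : Function.Bijective
      (fun p : {w : Fin (2 * k + 1) → Bool // ∀ j ≤ k, Odd (tc w (2 * j + 1))} × Bool =>
        (⟨Fin.snoc (Fin.snoc p.1.1 p.2) (if fp then p.2 else !p.2), by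
          constructor
          · intro j hj
            rw [tc_snoc2 _ _ _ (by omega : 2 * j + 1 ≤ 2 * k + 1)]
            exact p.1.2 j hj
          · rw [tc_snoc2_last]
            have hodd := p.1.2 k le_rfl
            rw [Nat.odd_iff] at hodd ⊢
            rcases p.2 with _ | _ <;> rcases fp with _ | _ <;> simp <;> omega⟩ :
        {v : Fin ((2 * k + 1) + 2) → Bool //
          (∀ j ≤ k, Odd (tc v (2 * j + 1))) ∧ (Odd (tc v ((2 * k + 1) + 2)) ↔ fp = true)})) := by
    constructor
    · rintro ⟨⟨w, hw⟩, b⟩ ⟨⟨w', hw'⟩, b'⟩ h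
      simp only [Subtype.mk.injEq] at h
      have hb : b = b' := by
        have h1 := congrFun h ((Fin.last (2 * k + 1)).castSucc)
        rwa [snoc2_eval_last, snoc2_eval_last] at h1
      have hww : w = w' := by
        funext i
        have h1 := congrFun h (i.castSucc.castSucc)
        rwa [snoc2_eval, snoc2_eval] at h1
      simp [hb, hww]
    · rintro ⟨v, hv1, hv2⟩
      obtain ⟨w, b, c, hveq⟩ : ∃ w b c, v = Fin.snoc (Fin.snoc w b) c :=
        ⟨_, _, _, eq_snoc2 v⟩
      subst hveq
      have hw : ∀ j ≤ k, Odd (tc w (2 * j + 1)) := by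
        intro j hj
        have h1 := hv1 j hj
        rwa [tc_snoc2 _ _ _ (by omega : 2 * j + 1 ≤ 2 * k + 1)] at h1
      have hk := hw k le_rfl
      rw [tc_snoc2_last] at hv2
      have hcb : c = if fp then b else !b := by
        rw [Nat.odd_iff] at hv2 hk
        rcases fp with _ | _ <;> rcases b with _ | _ <;> rcases c with _ | _ <;>
          simp only [if_pos, if_neg, Bool.not_false, Bool.not_true, if_true, if_false,
            reduceIte, Bool.false_eq_true, Bool.true_eq_false, iff_false, iff_true,
            Nat.add_zero] at hv2 ⊢ <;> omega
      refine ⟨⟨⟨w, hw⟩, b⟩, ?_⟩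
      simp only [Subtype.mk.injEq]
      rw [hcb]
  have := Nat.card_eq_of_bijective _ hf
  rw [Nat.card_prod, Nat.card_eq_fintype_card (α := Bool), Fintype.card_bool] at this
  rw [← this]
  ring

lemma card_allOdd (k : ℕ) :
    Nat.card {v : Fin (2 * k + 1) → Bool // allOdd k v} = 2 ^ k := by
  induction k with
  | zero =>
    rw [pow_zero, Nat.card_eq_one_iff_unique]
    have key : ∀ v : Fin 1 → Bool, allOdd 0 v ↔ v 0 = false := by
      intro v
      have h1 : tc v 1 = if v 0 = false then 1 else 0 := by
        rw [tc_as_sum, Fin.sum_univ_one]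
        simp
      constructor
      · intro h
        have := h 0 le_rfl
        rw [h1] at this
        by_contra hb
        simp [hb] at this
      · intro h j hj
        interval_cases j
        rw [h1, if_pos h]
        exact odd_one
    constructor
    · constructor
      rintro ⟨v, hv⟩ ⟨w, hw⟩
      refine Subtype.ext (funext fun i => ?_)
      have h0 : i = ⟨0, by omega⟩ := Fin.ext (by have := i.isLt; omega)
      rw [h0]
      exact ((key v).mp hv).trans ((key w).mp hw).symm
    · exact ⟨⟨fun _ => false, (key _).mpr rfl⟩⟩
  | succ k ih =>
    have hiff : ∀ v : Fin ((2 * k + 1) + 2) → Bool,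
        allOdd (k + 1) v ↔
          (∀ j ≤ k, Odd (tc v (2 * j + 1))) ∧ (Odd (tc v ((2 * k + 1) + 2)) ↔ true = true) := by
      intro v
      simp only [iff_true]
      constructor
      · intro h
        refine ⟨fun j hj => h j (by omega), ?_⟩
        exact h (k + 1) le_rfl
      · rintro ⟨h1, h2⟩ j hj
        rcases Nat.lt_or_ge j (k + 1) with hj' | hj'
        · exact h1 j (by omega)
        · have : j = k + 1 := by omega
          subst this
          exact h2
    have : Nat.card {v : Fin (2 * (k + 1) + 1) → Bool // allOdd (k + 1) v}
        = Nat.card {v : Fin ((2 * k + 1) + 2) → Bool //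
            (∀ j ≤ k, Odd (tc v (2 * j + 1))) ∧ (Odd (tc v ((2 * k + 1) + 2)) ↔ true = true)} :=
      Nat.card_congr (Equiv.subtypeEquivRight hiff)
    rw [this, card_step k true]
    show 2 * Nat.card {w : Fin (2 * k + 1) → Bool // allOdd k w} = 2 ^ (k + 1)
    rw [ih]
    ring

lemma card_stopExact (k : ℕ) :
    Nat.card {v : Fin (2 * k + 1) → Bool //
        (∀ j < k, Odd (tc v (2 * j + 1))) ∧ Even (tc v (2 * k + 1))} = 2 ^ k := by
  cases k with
  | zero =>
    rw [pow_zero, Nat.card_eq_one_iff_unique]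
    have key : ∀ v : Fin 1 → Bool,
        ((∀ j < 0, Odd (tc v (2 * j + 1))) ∧ Even (tc v (2 * 0 + 1))) ↔ v 0 = true := by
      intro v
      have h1 : tc v 1 = if v 0 = false then 1 else 0 := by
        rw [tc_as_sum, Fin.sum_univ_one]
        simp
      constructor
      · rintro ⟨-, h⟩
        rw [h1] at h
        by_contra hb
        have hb' : v 0 = false := by simpa using hb
        simp [hb'] at h
      · intro h
        refine ⟨fun j hj => absurd hj (by omega), ?_⟩
        rw [show 2 * 0 + 1 = 1 from rfl, h1]
        simp [h]
    constructor
    · constructor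
      rintro ⟨v, hv⟩ ⟨w, hw⟩
      refine Subtype.ext (funext fun i => ?_)
      have h0 : i = ⟨0, by omega⟩ := Fin.ext (by have := i.isLt; omega)
      rw [h0]
      exact ((key v).mp hv).trans ((key w).mp hw).symm
    · exact ⟨⟨fun _ => true, (key _).mpr rfl⟩⟩
  | succ k =>
    have hiff : ∀ v : Fin ((2 * k + 1) + 2) → Bool,
        ((∀ j < k + 1, Odd (tc v (2 * j + 1))) ∧ Even (tc v (2 * (k + 1) + 1))) ↔
          (∀ j ≤ k, Odd (tc v (2 * j + 1))) ∧ (Odd (tc v ((2 * k + 1) + 2)) ↔ false = true) := by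
      intro v
      show ((∀ j < k + 1, Odd (tc v (2 * j + 1))) ∧ Even (tc v ((2 * k + 1) + 2))) ↔ _
      simp only [Nat.even_iff, Nat.odd_iff, Bool.false_eq_true, iff_false]
      constructor
      · rintro ⟨h1, h2⟩
        exact ⟨fun j hj => h1 j (by omega), by omega⟩
      · rintro ⟨h1, h2⟩
        exact ⟨fun j hj => h1 j (by omega), by omega⟩
    have : Nat.card {v : Fin (2 * (k + 1) + 1) → Bool //
          (∀ j < k + 1, Odd (tc v (2 * j + 1))) ∧ Even (tc v (2 * (k + 1) + 1))}
        = Nat.card {v : Fin ((2 * k + 1) + 2) → Bool //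
            (∀ j ≤ k, Odd (tc v (2 * j + 1))) ∧ (Odd (tc v ((2 * k + 1) + 2)) ↔ false = true)} :=
      Nat.card_congr (Equiv.subtypeEquivRight hiff)
    rw [this, card_step k false]
    show 2 * Nat.card {w : Fin (2 * k + 1) → Bool // allOdd k w} = 2 ^ (k + 1)
    rw [card_allOdd]
    ring

lemma card_term_odd (k : ℕ) :
    Nat.card {v : Fin (2 * k + 1) → Bool //
        stopsAt v (2 * k + 1) ∧ ∀ s < 2 * k + 1, ¬ stopsAt v s} = 2 ^ k := by
  rw [← card_stopExact k]
  refine Nat.card_congr (Equiv.subtypeEquivRight fun v => ?_)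
  constructor
  · rintro ⟨h1, h2⟩
    have he := ((stopsAt_iff v (2 * k + 1) le_rfl).mp h1).2
    refine ⟨fun j hj => ?_, he⟩
    have h3 := h2 (2 * j + 1) (by omega)
    rw [stopsAt_iff v (2 * j + 1) (by omega)] at h3
    rw [Nat.odd_iff]
    rw [Nat.even_iff] at h3
    push_neg at h3
    have := h3 ⟨j, by ring⟩
    omega
  · rintro ⟨h1, h2⟩
    refine ⟨(stopsAt_iff v (2 * k + 1) le_rfl).mpr ⟨⟨k, by ring⟩, h2⟩, fun s hs hstop => ?_⟩
    rw [stopsAt_iff v s (by omega)] at hstop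
    obtain ⟨⟨j, hj⟩, heven⟩ := hstop
    have hjk : j < k := by omega
    have hodd := h1 j hjk
    rw [Nat.odd_iff] at hodd
    rw [Nat.even_iff] at heven
    rw [show s = 2 * j + 1 from by omega] at heven
    omega

lemma card_term_even (k : ℕ) :
    Nat.card {v : Fin (2 * k) → Bool //
        stopsAt v (2 * k) ∧ ∀ s < 2 * k, ¬ stopsAt v s} = 0 := by
  have : IsEmpty {v : Fin (2 * k) → Bool //
      stopsAt v (2 * k) ∧ ∀ s < 2 * k, ¬ stopsAt v s} := by
    constructor
    rintro ⟨v, h1, -⟩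
    have := ((stopsAt_iff v (2 * k) le_rfl).mp h1).1
    obtain ⟨j, hj⟩ := this
    omega
  exact Nat.card_of_isEmpty

/-- The expected number of tosses of a fair coin until the number of heads so far is odd
and the number of tails so far is even equals 3.  The probability that the first such time
is `t` equals the number of length-`t` toss sequences stopping exactly at time `t`,
divided by `2^t`. -/
theorem expected_tosses_eq_three :
    ∑' t : ℕ, (t : ℝ) *
      (Nat.card {v : Fin t → Bool // stopsAt v t ∧ ∀ s < t, ¬ stopsAt v s} : ℝ) / 2 ^ t
      = 3 := by
  set F : ℕ → ℝ := fun t => (t : ℝ) *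
      (Nat.card {v : Fin t → Bool // stopsAt v t ∧ ∀ s < t, ¬ stopsAt v s} : ℝ) / 2 ^ t with hF
  have he : ∀ k : ℕ, F (2 * k) = 0 := by
    intro k
    simp [hF, card_term_even k]
  have ho : ∀ k : ℕ, F (2 * k + 1) = (k : ℝ) * (1 / 2) ^ k + (1 / 2) ^ (k + 1) := by
    intro k
    rw [hF]
    simp only [card_term_odd k]
    push_cast
    rw [div_eq_iff (by positivity : ((2:ℝ)) ^ (2 * k + 1) ≠ 0)]
    rw [show 2 * k + 1 = k + (k + 1) from by ring, pow_add (2:ℝ) k (k + 1)]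
    rw [div_pow, div_pow, one_pow, one_pow]
    field_simp
    ring
  have h1 : HasSum (fun k : ℕ => (k : ℝ) * (1 / 2) ^ k) 2 := by
    have h := hasSum_coe_mul_geometric_of_norm_lt_one (𝕜 := ℝ) (r := 1 / 2)
      (by rw [Real.norm_eq_abs]; rw [abs_of_pos]; norm_num; norm_num)
    have h2v : (1 / 2 : ℝ) / (1 - 1 / 2) ^ 2 = 2 := by norm_num
    rw [h2v] at h
    exact h
  have h2 : HasSum (fun k : ℕ => ((1 : ℝ) / 2) ^ (k + 1)) 1 := by
    have h := hasSum_geometric_of_lt_one (r := (1/2 : ℝ)) (by norm_num) (by norm_num)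
    have h' := h.mul_left (1 / 2 : ℝ)
    have : (1 / 2 : ℝ) * (1 - 1 / 2)⁻¹ = 1 := by norm_num
    rw [this] at h'
    have hfun : (fun k : ℕ => ((1 : ℝ) / 2) ^ (k + 1)) = fun i : ℕ => 1 / 2 * (1 / 2 : ℝ) ^ i := by
      funext k
      rw [pow_succ]
      ring
    rw [hfun]
    exact h'
  have hodd : HasSum (fun k : ℕ => F (2 * k + 1)) 3 := by
    rw [funext ho]
    convert h1.add h2 using 1
    norm_num
  have heven : HasSum (fun k : ℕ => F (2 * k)) 0 := by
    rw [funext he]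
    exact hasSum_zero
  rw [show (3 : ℝ) = 0 + 3 from by norm_num, ← heven.tsum_eq, ← hodd.tsum_eq]
  exact (tsum_even_add_odd heven.summable hodd.summable).symm
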